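/- Let T > 0 and let u, v : [0,T] × ℝ → ℝ be twice continuously differentiable with u(t,x) > 0 and v(t,x) > 0 everywhere, satisfying ∂_t u = ∂_x(u ∂_x(u+v)) and ∂_t v = ∂_x(v ∂_x(u+v)) on (0,T) × ℝ. Assume there exists R > 0 such that u(t,x) = v(t,x) for all t ∈ [0,T] and |x| ≥ R, and that for each t the functions u(t,·) and v(t,·) are probability densities on ℝ (nonnegative with ∫_ℝ u(t,x) dx = ∫_ℝ v(t,x) dx = 1). Then for every t ∈ [0,T] the total variation distance satisfies ∫_ℝ |u(t,x) − v(t,x)| dx ≤ √( 2 H(u(0)||v(0)) ), where H(u(0)||v(0)) = ∫_ℝ u(0,x) log( u(0,x)/v(0,x) ) dx. -/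

import Mathlib

open Real Set MeasureTheory Topology


private lemma flog_nonneg {r : ℝ} (hr : 0 < r) : 0 ≤ Real.log r + 1/r - 1 := by
  have h := Real.log_le_sub_one_of_pos (show (0:ℝ) < 1/r by positivity)
  rw [Real.log_div one_ne_zero hr.ne'] at h
  simp at h
  rw [one_div]
  linarith

private lemma hasDerivAt_f {r : ℝ} (hr : 0 < r) :
    HasDerivAt (fun r => (r+1)*Real.log r - 2*(r-1)) (Real.log r + (r+1)/r - 2) r := by
  have h1 : HasDerivAt (fun r : ℝ => (r+1)*Real.log r) (1 * Real.log r + (r+1)*r⁻¹) r :=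
    (((hasDerivAt_id r).add_const 1).mul (Real.hasDerivAt_log hr.ne'))
  have h2 : HasDerivAt (fun r : ℝ => 2*(r-1)) 2 r := by
    simpa using ((hasDerivAt_id r).sub_const 1).const_mul 2
  have := h1.sub h2
  refine this.congr_deriv ?_
  ring

private lemma f_mono : MonotoneOn (fun r => (r+1)*Real.log r - 2*(r-1)) (Ioi (0:ℝ)) := by
  have hint : interior (Ioi (0:ℝ)) = Ioi 0 := interior_Ioi
  apply monotoneOn_of_deriv_nonneg (convex_Ioi 0)
  · intro x hx; exact (hasDerivAt_f hx).differentiableAt.continuousAt.continuousWithinAt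
  · rw [hint]; intro x hx; exact (hasDerivAt_f hx).differentiableAt.differentiableWithinAt
  · rw [hint]; intro x hx
    rw [(hasDerivAt_f hx).deriv]
    have := flog_nonneg hx
    have hx0 : x ≠ 0 := ne_of_gt hx
    have hx' : (x+1)/x = 1 + 1/x := by field_simp
    rw [hx']; linarith

private lemma f_sign {r : ℝ} (hr : 0 < r) :
    (1 ≤ r → 0 ≤ (r+1)*Real.log r - 2*(r-1)) ∧ (r ≤ 1 → (r+1)*Real.log r - 2*(r-1) ≤ 0) := by
  have h1 : ((1:ℝ)+1)*Real.log 1 - 2*((1:ℝ)-1) = 0 := by simp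
  constructor
  · intro h
    have := f_mono (mem_Ioi.mpr one_pos) (mem_Ioi.mpr hr) h
    simp only [h1] at this; exact this
  · intro h
    have := f_mono (mem_Ioi.mpr hr) (mem_Ioi.mpr one_pos) h
    simp only [h1] at this; exact this

private lemma hasDerivAt_h {r : ℝ} (hr : 0 < r) :
    HasDerivAt (fun r => (2*r+4)*(r*Real.log r - r + 1) - 3*(r-1)^2)
      (4*((r+1)*Real.log r - 2*(r-1))) r := by
  have hlog : HasDerivAt (fun r : ℝ => r * Real.log r) (1 * Real.log r + r * r⁻¹) r :=
    (hasDerivAt_id r).mul (Real.hasDerivAt_log hr.ne')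
  have h1 : HasDerivAt (fun r : ℝ => r*Real.log r - r + 1)
      (1 * Real.log r + r * r⁻¹ - 1) r := (hlog.sub (hasDerivAt_id r)).add_const 1
  have h2 : HasDerivAt (fun r : ℝ => 2*r+4) 2 r := by
    simpa using ((hasDerivAt_id r).const_mul 2).add_const 4
  have h3 : HasDerivAt (fun r : ℝ => 3*(r-1)^2) (3*(2*(r-1))) r := by
    have := (((hasDerivAt_id r).sub_const 1).pow 2).const_mul 3
    simpa using this
  have := (h2.mul h1).sub h3
  refine this.congr_deriv ?_
  have hrr : r * r⁻¹ = 1 := by field_simp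
  rw [hrr]; ring

private lemma h_nonneg {r : ℝ} (hr : 0 < r) :
    0 ≤ (2*r+4)*(r*Real.log r - r + 1) - 3*(r-1)^2 := by
  set h : ℝ → ℝ := fun r => (2*r+4)*(r*Real.log r - r + 1) - 3*(r-1)^2 with hh
  have h1 : h 1 = 0 := by simp [hh]
  have hcontIoi : ContinuousOn h (Ioi (0:ℝ)) := fun x hx =>
    (hasDerivAt_h hx).differentiableAt.continuousAt.continuousWithinAt
  rcases le_total 1 r with hcase | hcase
  · have hmono : MonotoneOn h (Ici 1) := by
      apply monotoneOn_of_deriv_nonneg (convex_Ici 1)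
        (hcontIoi.mono (fun x (hx : x ∈ Ici 1) => mem_Ioi.mpr (lt_of_lt_of_le one_pos hx)))
      · rw [interior_Ici]
        intro x hx
        exact (hasDerivAt_h (lt_trans one_pos hx)).differentiableAt.differentiableWithinAt
      · rw [interior_Ici]
        intro x hx
        rw [(hasDerivAt_h (lt_trans one_pos hx)).deriv]
        have := (f_sign (lt_trans one_pos hx)).1 (le_of_lt hx)
        linarith
    have := hmono (mem_Ici.mpr le_rfl) (mem_Ici.mpr hcase) hcase
    rw [h1] at this; exact this
  · have hanti : AntitoneOn h (Ioc 0 1) := by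
      apply antitoneOn_of_deriv_nonpos (convex_Ioc 0 1) (hcontIoi.mono Ioc_subset_Ioi_self)
      · rw [interior_Ioc]
        intro x hx
        exact (hasDerivAt_h hx.1).differentiableAt.differentiableWithinAt
      · rw [interior_Ioc]
        intro x hx
        rw [(hasDerivAt_h hx.1).deriv]
        have := (f_sign hx.1).2 (le_of_lt hx.2)
        linarith
    have := hanti (mem_Ioc.mpr ⟨hr, hcase⟩) (mem_Ioc.mpr ⟨one_pos, le_rfl⟩) hcase
    rw [h1] at this; exact this

/-- Pointwise Pinsker-type inequality. -/
lemma pinsker_pointwise {a b : ℝ} (ha : 0 < a) (hb : 0 < b) :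
    3*(a-b)^2 ≤ (2*a+4*b)*(a*Real.log (a/b) - a + b) := by
  have hr : 0 < a/b := by positivity
  have hb' : b ≠ 0 := hb.ne'
  have hb2 : 0 < b^2 := by positivity
  have h := h_nonneg hr
  have e : (2*(a/b)+4)*((a/b)*Real.log (a/b) - (a/b) + 1) - 3*((a/b)-1)^2
      = ((2*a+4*b)*(a*Real.log (a/b) - a + b) - 3*(a-b)^2)/b^2 := by
    field_simp
  rw [e] at h
  by_contra hlt
  push_neg at hlt
  have hneg : ((2*a+4*b)*(a*Real.log (a/b) - a + b) - 3*(a-b)^2)/b^2 < 0 :=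
    div_neg_of_neg_of_pos (by linarith) hb2
  linarith


/-- Partial derivative in the first (time) variable. -/
noncomputable def pt (f : ℝ → ℝ → ℝ) (t x : ℝ) : ℝ := deriv (fun s => f s x) t

/-- Partial derivative in the second (space) variable. -/
noncomputable def px (f : ℝ → ℝ → ℝ) (t x : ℝ) : ℝ := deriv (fun y => f t y) x

section Reg
variable {T : ℝ} {u v : ℝ → ℝ → ℝ}

lemma slice_contDiff (h : ContDiffOn ℝ 2 (Function.uncurry u) (Icc 0 T ×ˢ univ)) {t : ℝ}
    (ht : t ∈ Icc 0 T) : ContDiff ℝ 2 (u t) := by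
  rw [← contDiffOn_univ]
  have hline : ContDiff ℝ 2 (fun y : ℝ => (t, y)) := contDiff_const.prodMk contDiff_id
  exact h.comp hline.contDiffOn (fun y _ => ⟨ht, mem_univ y⟩)

lemma strip_mem_nhds {t x : ℝ} (ht : t ∈ Ioo 0 T) :
    (Icc 0 T ×ˢ (univ : Set ℝ)) ∈ 𝓝 ((t, x) : ℝ × ℝ) := by
  apply Filter.mem_of_superset
    ((isOpen_Ioo.prod isOpen_univ).mem_nhds (show (t,x) ∈ Ioo 0 T ×ˢ univ from ⟨ht, mem_univ x⟩))
  exact prod_mono Ioo_subset_Icc_self (subset_refl _)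

lemma contDiffAt_strip (h : ContDiffOn ℝ 2 (Function.uncurry u) (Icc 0 T ×ˢ univ)) {t x : ℝ}
    (ht : t ∈ Ioo 0 T) : ContDiffAt ℝ 2 (Function.uncurry u) (t, x) :=
  h.contDiffAt (strip_mem_nhds ht)

lemma hasDerivAt_time (h : ContDiffOn ℝ 2 (Function.uncurry u) (Icc 0 T ×ˢ univ)) {t x : ℝ}
    (ht : t ∈ Ioo 0 T) :
    HasDerivAt (fun s => u s x) (fderiv ℝ (Function.uncurry u) (t, x) (1, 0)) t := by
  have hd : HasFDerivAt (Function.uncurry u) (fderiv ℝ (Function.uncurry u) (t, x)) (t, x) :=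
    ((contDiffAt_strip h ht).differentiableAt (by norm_num)).hasFDerivAt
  have hline : HasDerivAt (fun s : ℝ => ((s, x) : ℝ × ℝ)) ((1 : ℝ), (0 : ℝ)) t :=
    (hasDerivAt_id t).prodMk (hasDerivAt_const t x)
  exact hd.comp_hasDerivAt t hline

lemma pt_eq (h : ContDiffOn ℝ 2 (Function.uncurry u) (Icc 0 T ×ˢ univ)) {t x : ℝ}
    (ht : t ∈ Ioo 0 T) :
    pt u t x = fderiv ℝ (Function.uncurry u) (t, x) (1, 0) :=
  (hasDerivAt_time h ht).deriv

lemma contOn_pt (h : ContDiffOn ℝ 2 (Function.uncurry u) (Icc 0 T ×ˢ univ)) :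
    ContinuousOn (fun p : ℝ × ℝ => pt u p.1 p.2) (Ioo 0 T ×ˢ univ) := by
  have h1 : ContinuousOn (fun p : ℝ × ℝ => fderiv ℝ (Function.uncurry u) p (1, 0))
      (Ioo 0 T ×ˢ univ) := by
    intro p hp
    have hc2 : ContDiffAt ℝ 2 (Function.uncurry u) p := by
      have := contDiffAt_strip h (t := p.1) (x := p.2) hp.1
      simpa using this
    have hct : ContDiffAt ℝ 1 (fderiv ℝ (Function.uncurry u)) p :=
      hc2.fderiv_right (by norm_num)
    exact (((ContinuousLinearMap.apply ℝ ℝ ((1:ℝ),(0:ℝ))).continuous.continuousAt).comp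
      hct.continuousAt).continuousWithinAt
  apply h1.congr
  intro p hp
  exact pt_eq h (t := p.1) (x := p.2) hp.1

end Reg

/-- time-direction entropy derivative -/
lemma hasDerivAt_ent (f g : ℝ → ℝ) (f' g' t : ℝ) (hf : HasDerivAt f f' t) (hg : HasDerivAt g g' t)
    (hfp : ∀ s, 0 < f s) (hgp : ∀ s, 0 < g s) :
    HasDerivAt (fun s => f s * Real.log (f s / g s))
      (f' * (Real.log (f t / g t) + 1) - (f t / g t) * g') t := by
  have hrw : (fun s => f s * Real.log (f s / g s))
      = fun s => f s * (Real.log (f s) - Real.log (g s)) := by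
    funext s; rw [Real.log_div (hfp s).ne' (hgp s).ne']
  rw [hrw, Real.log_div (hfp t).ne' (hgp t).ne']
  have h := hf.mul ((hf.log (hfp t).ne').sub (hg.log (hgp t).ne'))
  refine h.congr_deriv ?_
  simp only [Pi.sub_apply]
  field_simp [(hfp t).ne', (hgp t).ne']
  ring

/-- the key spatial identity -/
lemma key_identity (U V : ℝ → ℝ) (hU : ContDiff ℝ 2 U) (hV : ContDiff ℝ 2 V)
    (hUpos : ∀ y, 0 < U y) (hVpos : ∀ y, 0 < V y) (x : ℝ) {pu pv : ℝ}
    (hpu : pu = deriv (fun y => U y * deriv (fun z => U z + V z) y) x)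
    (hpv : pv = deriv (fun y => V y * deriv (fun z => U z + V z) y) x) :
    HasDerivAt (fun y => U y * deriv (fun z => U z + V z) y * Real.log (U y / V y))
      (pu * (Real.log (U x / V x) + 1) - (U x / V x) * pv) x := by
  have hUd : Differentiable ℝ U := hU.differentiable (by norm_num)
  have hVd : Differentiable ℝ V := hV.differentiable (by norm_num)
  have hU1 : ContDiff ℝ 1 (deriv U) := (contDiff_succ_iff_deriv.mp hU).2.2
  have hV1 : ContDiff ℝ 1 (deriv V) := (contDiff_succ_iff_deriv.mp hV).2.2
  have hU1d : Differentiable ℝ (deriv U) := hU1.differentiable (by norm_num)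
  have hV1d : Differentiable ℝ (deriv V) := hV1.differentiable (by norm_num)
  have hW : ∀ z, deriv (fun z => U z + V z) z = deriv U z + deriv V z := by
    intro z; exact deriv_add (hUd z) (hVd z)
  have hu1 : ∀ y, HasDerivAt U (deriv U y) y := fun y => (hUd y).hasDerivAt
  have hv1 : ∀ y, HasDerivAt V (deriv V y) y := fun y => (hVd y).hasDerivAt
  have hu2 : ∀ y, HasDerivAt (deriv U) (deriv (deriv U) y) y := fun y => (hU1d y).hasDerivAt
  have hv2 : ∀ y, HasDerivAt (deriv V) (deriv (deriv V) y) y := fun y => (hV1d y).hasDerivAt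
  have hP : HasDerivAt (fun y => U y * (deriv U y + deriv V y))
      (deriv U x * (deriv U x + deriv V x) + U x * (deriv (deriv U) x + deriv (deriv V) x)) x :=
    (hu1 x).mul ((hu2 x).add (hv2 x))
  have hQ : HasDerivAt (fun y => V y * (deriv U y + deriv V y))
      (deriv V x * (deriv U x + deriv V x) + V x * (deriv (deriv U) x + deriv (deriv V) x)) x :=
    (hv1 x).mul ((hu2 x).add (hv2 x))
  have hpu' : pu = deriv U x * (deriv U x + deriv V x)
      + U x * (deriv (deriv U) x + deriv (deriv V) x) := by
    rw [hpu]
    have heq : (fun y => U y * deriv (fun z => U z + V z) y)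
        = fun y => U y * (deriv U y + deriv V y) := by
      funext y; rw [hW y]
    rw [heq, hP.deriv]
  have hpv' : pv = deriv V x * (deriv U x + deriv V x)
      + V x * (deriv (deriv U) x + deriv (deriv V) x) := by
    rw [hpv]
    have heq : (fun y => V y * deriv (fun z => U z + V z) y)
        = fun y => V y * (deriv U y + deriv V y) := by
      funext y; rw [hW y]
    rw [heq, hQ.deriv]
  have hlog : HasDerivAt (fun y => Real.log (U y) - Real.log (V y))
      (deriv U x / U x - deriv V x / V x) x :=
    ((hu1 x).log (hUpos x).ne').sub ((hv1 x).log (hVpos x).ne')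
  have hG := hP.mul hlog
  have hrw2 : (fun y => U y * deriv (fun z => U z + V z) y * Real.log (U y / V y))
      = fun y => U y * (deriv U y + deriv V y) * (Real.log (U y) - Real.log (V y)) := by
    funext y; rw [hW y, Real.log_div (hUpos y).ne' (hVpos y).ne']
  rw [hrw2, Real.log_div (hUpos x).ne' (hVpos x).ne']
  refine hG.congr_deriv ?_
  rw [hpu', hpv']
  have h1 : U x ≠ 0 := (hUpos x).ne'
  have h2 : V x ≠ 0 := (hVpos x).ne'
  field_simp
  ring

noncomputable def entF (u v : ℝ → ℝ → ℝ) (t x : ℝ) : ℝ := u t x * Real.log (u t x / v t x)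
noncomputable def entFd (u v : ℝ → ℝ → ℝ) (t x : ℝ) : ℝ :=
  pt u t x * (Real.log (u t x / v t x) + 1) - (u t x / v t x) * pt v t x
noncomputable def entG (u v : ℝ → ℝ → ℝ) (t y : ℝ) : ℝ :=
  u t y * deriv (fun z => u t z + v t z) y * Real.log (u t y / v t y)
noncomputable def entH (u v : ℝ → ℝ → ℝ) (R t : ℝ) : ℝ := ∫ x in (-R)..R, entF u v t x

section Main
variable {T : ℝ} {u v : ℝ → ℝ → ℝ}

lemma entFd_contOn (hus : ContDiffOn ℝ 2 (Function.uncurry u) (Icc 0 T ×ˢ univ))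
    (hvs : ContDiffOn ℝ 2 (Function.uncurry v) (Icc 0 T ×ˢ univ))
    (hupos : ∀ t x : ℝ, 0 < u t x) (hvpos : ∀ t x : ℝ, 0 < v t x) :
    ContinuousOn (fun p : ℝ × ℝ => entFd u v p.1 p.2) (Ioo 0 T ×ˢ univ) := by
  have hsub : (Ioo 0 T ×ˢ (univ : Set ℝ)) ⊆ Icc 0 T ×ˢ univ :=
    prod_mono Ioo_subset_Icc_self (subset_refl _)
  have hucont : ContinuousOn (fun p : ℝ × ℝ => u p.1 p.2) (Ioo 0 T ×ˢ univ) :=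
    (hus.continuousOn).mono hsub
  have hvcont : ContinuousOn (fun p : ℝ × ℝ => v p.1 p.2) (Ioo 0 T ×ˢ univ) :=
    (hvs.continuousOn).mono hsub
  have hdiv : ContinuousOn (fun p : ℝ × ℝ => u p.1 p.2 / v p.1 p.2) (Ioo 0 T ×ˢ univ) :=
    hucont.div hvcont (fun p _ => (hvpos p.1 p.2).ne')
  have hlog : ContinuousOn (fun p : ℝ × ℝ => Real.log (u p.1 p.2 / v p.1 p.2))
      (Ioo 0 T ×ˢ univ) :=
    hdiv.log (fun p _ => (div_pos (hupos p.1 p.2) (hvpos p.1 p.2)).ne')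
  exact ((contOn_pt hus).mul (hlog.add continuousOn_const)).sub
    (hdiv.mul (contOn_pt hvs))

lemma ftc_x (hus : ContDiffOn ℝ 2 (Function.uncurry u) (Icc 0 T ×ˢ univ))
    (hvs : ContDiffOn ℝ 2 (Function.uncurry v) (Icc 0 T ×ˢ univ))
    (hupos : ∀ t x : ℝ, 0 < u t x) (hvpos : ∀ t x : ℝ, 0 < v t x)
    (hupde : ∀ t ∈ Ioo (0:ℝ) T, ∀ x : ℝ,
      pt u t x = px (fun s y => u s y * px (fun a b => u a b + v a b) s y) t x)
    (hvpde : ∀ t ∈ Ioo (0:ℝ) T, ∀ x : ℝ,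
      pt v t x = px (fun s y => v s y * px (fun a b => u a b + v a b) s y) t x)
    {t : ℝ} (ht : t ∈ Ioo (0:ℝ) T) {R : ℝ} (hR : 0 < R)
    (hdec : ∀ x : ℝ, R ≤ |x| → u t x = v t x) :
    ∫ x in (-R)..R, entFd u v t x = 0 := by
  have ht' : t ∈ Icc (0:ℝ) T := Ioo_subset_Icc_self ht
  have hder : ∀ x ∈ uIcc (-R) R, HasDerivAt (entG u v t) (entFd u v t x) x := by
    intro x _
    exact key_identity (u t) (v t) (slice_contDiff hus ht') (slice_contDiff hvs ht')
      (hupos t) (hvpos t) x (hupde t ht x) (hvpde t ht x)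
  have hcx : Continuous (entFd u v t) := by
    rw [← continuousOn_univ]
    have := (entFd_contOn hus hvs hupos hvpos).comp
      (Continuous.continuousOn (continuous_const.prodMk continuous_id)
        : ContinuousOn (fun x : ℝ => ((t, x) : ℝ × ℝ)) univ)
      (fun x _ => ⟨ht, mem_univ x⟩)
    exact this
  rw [intervalIntegral.integral_eq_sub_of_hasDerivAt hder (hcx.intervalIntegrable (-R) R)]
  have hzR : entG u v t R = 0 := by
    have := hdec R (by rw [abs_of_pos hR])
    simp [entG, this, div_self (hvpos t R).ne']
  have hzR' : entG u v t (-R) = 0 := by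
    have := hdec (-R) (by rw [abs_neg, abs_of_pos hR])
    simp [entG, this, div_self (hvpos t (-R)).ne']
  rw [hzR, hzR']; ring

lemma entF_contOn (hus : ContDiffOn ℝ 2 (Function.uncurry u) (Icc 0 T ×ˢ univ))
    (hvs : ContDiffOn ℝ 2 (Function.uncurry v) (Icc 0 T ×ˢ univ))
    (hupos : ∀ t x : ℝ, 0 < u t x) (hvpos : ∀ t x : ℝ, 0 < v t x) :
    ContinuousOn (fun p : ℝ × ℝ => entF u v p.1 p.2) (Icc 0 T ×ˢ univ) := by
  have hucont : ContinuousOn (fun p : ℝ × ℝ => u p.1 p.2) (Icc 0 T ×ˢ univ) := hus.continuousOn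
  have hvcont : ContinuousOn (fun p : ℝ × ℝ => v p.1 p.2) (Icc 0 T ×ˢ univ) := hvs.continuousOn
  exact hucont.mul ((hucont.div hvcont (fun p _ => (hvpos p.1 p.2).ne')).log
    (fun p _ => (div_pos (hupos p.1 p.2) (hvpos p.1 p.2)).ne'))

lemma entF_slice_cont (hus : ContDiffOn ℝ 2 (Function.uncurry u) (Icc 0 T ×ˢ univ))
    (hvs : ContDiffOn ℝ 2 (Function.uncurry v) (Icc 0 T ×ˢ univ))
    (hupos : ∀ t x : ℝ, 0 < u t x) (hvpos : ∀ t x : ℝ, 0 < v t x)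
    {t : ℝ} (ht : t ∈ Icc (0:ℝ) T) : Continuous (entF u v t) := by
  have hcu : Continuous (u t) := (slice_contDiff hus ht).continuous
  have hcv : Continuous (v t) := (slice_contDiff hvs ht).continuous
  exact hcu.mul ((hcu.div hcv (fun x => (hvpos t x).ne')).log
    (fun x => (div_pos (hupos t x) (hvpos t x)).ne'))

lemma entH_const_Ioo (hus : ContDiffOn ℝ 2 (Function.uncurry u) (Icc 0 T ×ˢ univ))
    (hvs : ContDiffOn ℝ 2 (Function.uncurry v) (Icc 0 T ×ˢ univ))
    (hupos : ∀ t x : ℝ, 0 < u t x) (hvpos : ∀ t x : ℝ, 0 < v t x)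
    (hupde : ∀ t ∈ Ioo (0:ℝ) T, ∀ x : ℝ,
      pt u t x = px (fun s y => u s y * px (fun a b => u a b + v a b) s y) t x)
    (hvpde : ∀ t ∈ Ioo (0:ℝ) T, ∀ x : ℝ,
      pt v t x = px (fun s y => v s y * px (fun a b => u a b + v a b) s y) t x)
    {R : ℝ} (hR : 0 < R)
    (hdecay : ∀ t ∈ Icc (0:ℝ) T, ∀ x : ℝ, R ≤ |x| → u t x = v t x)
    {s t : ℝ} (hs : s ∈ Ioo (0:ℝ) T) (ht : t ∈ Ioo (0:ℝ) T) (hst : s ≤ t) :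
    entH u v R s = entH u v R t := by
  have hRR : (-R) ≤ R := by linarith
  have hIccsub : Icc s t ⊆ Ioo (0:ℝ) T := fun τ hτ => ⟨lt_of_lt_of_le hs.1 hτ.1,
    lt_of_le_of_lt hτ.2 ht.2⟩
  -- step 1: time FTC pointwise in x
  have hstep : ∀ x : ℝ, entF u v t x - entF u v s x = ∫ τ in s..t, entFd u v τ x := by
    intro x
    rw [eq_comm]
    apply intervalIntegral.integral_eq_sub_of_hasDerivAt
    · intro τ hτ
      have hτ' : τ ∈ Ioo (0:ℝ) T := hIccsub (by rwa [uIcc_of_le hst] at hτ)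
      have hut : HasDerivAt (fun σ => u σ x) (pt u τ x) τ :=
        (hasDerivAt_time hus hτ').differentiableAt.hasDerivAt
      have hvt : HasDerivAt (fun σ => v σ x) (pt v τ x) τ :=
        (hasDerivAt_time hvs hτ').differentiableAt.hasDerivAt
      exact hasDerivAt_ent _ _ _ _ τ hut hvt (fun σ => hupos σ x) (fun σ => hvpos σ x)
    · apply ContinuousOn.intervalIntegrable
      exact (entFd_contOn hus hvs hupos hvpos).comp
        ((continuous_id.prodMk continuous_const).continuousOn)
        (fun τ hτ => ⟨hIccsub (by rwa [uIcc_of_le hst] at hτ), mem_univ x⟩)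
  -- integrability for the swap
  have hFdKcont : ContinuousOn (fun q : ℝ × ℝ => entFd u v q.2 q.1)
      (Icc (-R) R ×ˢ Icc s t) := by
    apply (entFd_contOn hus hvs hupos hvpos).comp continuous_swap.continuousOn
    intro q hq
    exact ⟨hIccsub hq.2, mem_univ _⟩
  have hintK : IntegrableOn (fun q : ℝ × ℝ => entFd u v q.2 q.1)
      (Ioc (-R) R ×ˢ Ioc s t) volume := by
    apply IntegrableOn.mono_set
      (hFdKcont.integrableOn_compact (isCompact_Icc.prod isCompact_Icc))
    exact prod_mono Ioc_subset_Icc_self Ioc_subset_Icc_self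
  -- step 2: the swap
  have hswap : ∫ x in (-R)..R, (∫ τ in s..t, entFd u v τ x)
      = ∫ τ in s..t, (∫ x in (-R)..R, entFd u v τ x) := by
    simp only [intervalIntegral.integral_of_le hst, intervalIntegral.integral_of_le hRR]
    apply MeasureTheory.integral_integral_swap
    rw [Measure.prod_restrict]
    rw [← Measure.volume_eq_prod]
    exact hintK
  -- step 3: inner integrals vanish
  have hzero : ∀ τ ∈ uIcc s t, (∫ x in (-R)..R, entFd u v τ x) = 0 := by
    intro τ hτ
    have hτ' : τ ∈ Ioo (0:ℝ) T := hIccsub (by rwa [uIcc_of_le hst] at hτ)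
    exact ftc_x hus hvs hupos hvpos hupde hvpde hτ' hR
      (fun x hx => hdecay τ (Ioo_subset_Icc_self hτ') x hx)
  -- assemble
  have hFint : ∀ τ ∈ Icc (0:ℝ) T, IntervalIntegrable (entF u v τ) volume (-R) R :=
    fun τ hτ => (entF_slice_cont hus hvs hupos hvpos hτ).intervalIntegrable (-R) R
  have hsub : entH u v R t - entH u v R s
      = ∫ x in (-R)..R, (entF u v t x - entF u v s x) := by
    rw [intervalIntegral.integral_sub (hFint t (Ioo_subset_Icc_self ht))
      (hFint s (Ioo_subset_Icc_self hs))]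
    rfl
  have : entH u v R t - entH u v R s = 0 := by
    rw [hsub]
    rw [intervalIntegral.integral_congr (g := fun x => ∫ τ in s..t, entFd u v τ x)
      (fun x _ => hstep x)]
    rw [hswap]
    rw [intervalIntegral.integral_congr (g := fun τ => (0:ℝ)) hzero]
    simp
  linarith [this]

lemma entH_contOn (hus : ContDiffOn ℝ 2 (Function.uncurry u) (Icc 0 T ×ˢ univ))
    (hvs : ContDiffOn ℝ 2 (Function.uncurry v) (Icc 0 T ×ˢ univ))
    (hupos : ∀ t x : ℝ, 0 < u t x) (hvpos : ∀ t x : ℝ, 0 < v t x)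
    {R : ℝ} (hR : 0 < R) :
    ContinuousOn (entH u v R) (Icc (0:ℝ) T) := by
  have hRR : (-R) ≤ R := by linarith
  have hFc := entF_contOn hus hvs hupos hvpos
  obtain ⟨M, hM⟩ := (isCompact_Icc.prod (isCompact_Icc (a := -R) (b := R))).exists_bound_of_continuousOn
    (hFc.mono (prod_mono subset_rfl (subset_univ _)))
  intro t₀ ht₀
  apply intervalIntegral.continuousWithinAt_of_dominated_interval (bound := fun _ => M)
  · filter_upwards [self_mem_nhdsWithin] with τ hτ
    exact ((entF_slice_cont hus hvs hupos hvpos hτ).aestronglyMeasurable).restrict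
  · filter_upwards [self_mem_nhdsWithin] with τ hτ
    apply ae_of_all
    intro x hx
    have hx' : x ∈ Icc (-R) R := Ioc_subset_Icc_self (by rwa [uIoc_of_le hRR] at hx)
    exact hM ((τ, x) : ℝ × ℝ) ⟨hτ, hx'⟩
  · exact intervalIntegrable_const
  · apply ae_of_all
    intro x _
    exact (hFc.comp ((continuous_id.prodMk continuous_const).continuousOn)
      (fun τ hτ => ⟨hτ, mem_univ x⟩)).continuousWithinAt ht₀

lemma entH_eq_init (hT : 0 < T)
    (hus : ContDiffOn ℝ 2 (Function.uncurry u) (Icc 0 T ×ˢ univ))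
    (hvs : ContDiffOn ℝ 2 (Function.uncurry v) (Icc 0 T ×ˢ univ))
    (hupos : ∀ t x : ℝ, 0 < u t x) (hvpos : ∀ t x : ℝ, 0 < v t x)
    (hupde : ∀ t ∈ Ioo (0:ℝ) T, ∀ x : ℝ,
      pt u t x = px (fun s y => u s y * px (fun a b => u a b + v a b) s y) t x)
    (hvpde : ∀ t ∈ Ioo (0:ℝ) T, ∀ x : ℝ,
      pt v t x = px (fun s y => v s y * px (fun a b => u a b + v a b) s y) t x)
    {R : ℝ} (hR : 0 < R)
    (hdecay : ∀ t ∈ Icc (0:ℝ) T, ∀ x : ℝ, R ≤ |x| → u t x = v t x) :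
    ∀ t ∈ Icc (0:ℝ) T, entH u v R t = entH u v R 0 := by
  have hmid : T/2 ∈ Ioo (0:ℝ) T := ⟨half_pos hT, half_lt_self hT⟩
  have hIoo : ∀ τ ∈ Ioo (0:ℝ) T, entH u v R τ = entH u v R (T/2) := by
    intro τ hτ
    rcases le_total τ (T/2) with hc | hc
    · exact entH_const_Ioo hus hvs hupos hvpos hupde hvpde hR hdecay hτ hmid hc
    · exact (entH_const_Ioo hus hvs hupos hvpos hupde hvpde hR hdecay hmid hτ hc).symm
  have hIcc : ∀ t ∈ Icc (0:ℝ) T, entH u v R t = entH u v R (T/2) := by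
    intro t ht
    set q : ℕ → ℝ := fun n => t + (T/2 - t)/((n:ℝ)+1) with hq
    have hq_eq : ∀ n : ℕ, q n = (t*(n:ℝ) + T/2)/((n:ℝ)+1) := by
      intro n
      have hn : ((n:ℝ)+1) ≠ 0 := by positivity
      rw [hq]
      field_simp
      ring
    have hq_mem : ∀ n : ℕ, q n ∈ Ioo (0:ℝ) T := by
      intro n
      have hn : (0:ℝ) < (n:ℝ)+1 := by positivity
      have hnn : (0:ℝ) ≤ (n:ℝ) := Nat.cast_nonneg n
      constructor
      · rw [hq_eq n]
        apply div_pos _ hn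
        nlinarith [mul_nonneg ht.1 hnn, hT]
      · rw [hq_eq n, div_lt_iff₀ hn]
        nlinarith [mul_le_mul_of_nonneg_right ht.2 hnn, hT]
    have hq_tendsto : Filter.Tendsto q Filter.atTop (𝓝 t) := by
      have h0 : Filter.Tendsto (fun n : ℕ => (T/2 - t) * (1/((n:ℝ)+1)))
          Filter.atTop (𝓝 ((T/2 - t) * 0)) :=
        tendsto_one_div_add_atTop_nhds_zero_nat.const_mul (T/2 - t)
      have h1 : Filter.Tendsto (fun n : ℕ => t + (T/2 - t) * (1/((n:ℝ)+1)))
          Filter.atTop (𝓝 (t + (T/2 - t) * 0)) := tendsto_const_nhds.add h0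
      have : (fun n : ℕ => t + (T/2 - t) * (1/((n:ℝ)+1))) = q := by
        funext n; rw [hq]; ring
      rw [this] at h1
      simpa using h1
    have hcw : ContinuousWithinAt (entH u v R) (Icc 0 T) t :=
      (entH_contOn hus hvs hupos hvpos hR) t ht
    have htend : Filter.Tendsto (fun n => entH u v R (q n)) Filter.atTop
        (𝓝 (entH u v R t)) := by
      apply hcw.tendsto.comp
      apply tendsto_nhdsWithin_of_tendsto_nhds_of_eventually_within q hq_tendsto
      exact Filter.Eventually.of_forall (fun n => Ioo_subset_Icc_self (hq_mem n))
    have hconst : (fun n => entH u v R (q n)) = fun _ => entH u v R (T/2) := by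
      funext n; exact hIoo (q n) (hq_mem n)
    rw [hconst] at htend
    exact (tendsto_nhds_unique htend tendsto_const_nhds)
  intro t ht
  rw [hIcc t ht, hIcc 0 ⟨le_refl 0, hT.le⟩]

end Main

section Final
variable {T : ℝ} {u v : ℝ → ℝ → ℝ}

private lemma flog_nonneg' {r : ℝ} (hr : 0 < r) : 0 ≤ Real.log r + 1/r - 1 := by
  have h := Real.log_le_sub_one_of_pos (show (0:ℝ) < 1/r by positivity)
  rw [Real.log_div one_ne_zero hr.ne'] at h
  simp at h
  rw [one_div]
  linarith

lemma ent_ge {a b : ℝ} (ha : 0 < a) (hb : 0 < b) : 0 ≤ a * Real.log (a/b) - a + b := by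
  have h := flog_nonneg' (div_pos ha hb)
  have h2 : a * (Real.log (a/b) + 1/(a/b) - 1) = a * Real.log (a/b) + b - a := by
    field_simp
  nlinarith [mul_nonneg ha.le h]

lemma not_mem_Icc_abs {R x : ℝ} (hx : x ∉ Icc (-R) R) : R ≤ |x| := by
  rw [mem_Icc, not_and_or] at hx
  rcases hx with h | h
  · push_neg at h
    have hh : R ≤ -x := by linarith
    exact hh.trans (neg_le_abs x)
  · push_neg at h
    exact (le_of_lt h).trans (le_abs_self x)

lemma entF_supp (hvpos : ∀ t x : ℝ, 0 < v t x) {R t : ℝ}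
    (hdec : ∀ x : ℝ, R ≤ |x| → u t x = v t x) :
    ∀ x ∉ Icc (-R) R, entF u v t x = 0 := by
  intro x hx
  have := hdec x (not_mem_Icc_abs hx)
  simp [entF, this, div_self (hvpos t x).ne']

lemma integral_entF (hus : ContDiffOn ℝ 2 (Function.uncurry u) (Icc 0 T ×ˢ univ))
    (hvs : ContDiffOn ℝ 2 (Function.uncurry v) (Icc 0 T ×ˢ univ))
    (hupos : ∀ t x : ℝ, 0 < u t x) (hvpos : ∀ t x : ℝ, 0 < v t x)
    {R : ℝ} (hR : 0 < R) {t : ℝ} (ht : t ∈ Icc (0:ℝ) T)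
    (hdec : ∀ x : ℝ, R ≤ |x| → u t x = v t x) :
    Integrable (entF u v t) ∧ ∫ x, entF u v t x = entH u v R t := by
  have hRR : (-R) ≤ R := by linarith
  have hcont := entF_slice_cont hus hvs hupos hvpos ht
  have hsupp := entF_supp hvpos hdec (R := R) (t := t)
  constructor
  · exact hcont.integrable_of_hasCompactSupport
      (HasCompactSupport.intro isCompact_Icc hsupp)
  · rw [show ∫ x, entF u v t x = ∫ x in Icc (-R) R, entF u v t x from
      (setIntegral_eq_integral_of_forall_compl_eq_zero hsupp).symm]
    rw [integral_Icc_eq_integral_Ioc]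
    rw [entH, intervalIntegral.integral_of_le hRR]

end Final

/-- Pinsker's inequality for positive continuous densities agreeing outside a compact set. -/
lemma pinsker_step (U V : ℝ → ℝ) (hU : Continuous U) (hV : Continuous V)
    (hUpos : ∀ x, 0 < U x) (hVpos : ∀ x, 0 < V x)
    (hUint : Integrable U) (hVint : Integrable V)
    (hUm : ∫ x, U x = 1) (hVm : ∫ x, V x = 1)
    {R : ℝ} (hR : 0 < R) (hdec : ∀ x : ℝ, R ≤ |x| → U x = V x) :
    ∫ x, |U x - V x| ≤ Real.sqrt (2 * ∫ x, U x * Real.log (U x / V x)) := by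
  have hRR : (-R) ≤ R := by linarith
  set A : ℝ → ℝ := fun x => (2 * U x + 4 * V x)/3 with hA
  set B : ℝ → ℝ := fun x => U x * Real.log (U x / V x) - U x + V x with hB
  have hApos : ∀ x, 0 < A x := by
    intro x
    have h1 := hUpos x
    have h2 := hVpos x
    rw [hA]
    positivity
  have hBnn : ∀ x, 0 ≤ B x := fun x => ent_ge (hUpos x) (hVpos x)
  have hptw : ∀ x, |U x - V x| ≤ Real.sqrt (A x) * Real.sqrt (B x) := by
    intro x
    have h3 := pinsker_pointwise (hUpos x) (hVpos x)
    have hsq : (U x - V x)^2 ≤ A x * B x := by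
      simp only [hA, hB]
      nlinarith [h3]
    calc |U x - V x| = Real.sqrt ((U x - V x)^2) := (Real.sqrt_sq_eq_abs _).symm
      _ ≤ Real.sqrt (A x * B x) := Real.sqrt_le_sqrt hsq
      _ = Real.sqrt (A x) * Real.sqrt (B x) := Real.sqrt_mul (hApos x).le _
  have hBsupp : ∀ x ∉ Icc (-R) R, B x = 0 := by
    intro x hx
    have heq := hdec x (not_mem_Icc_abs hx)
    simp [hB, heq, div_self (hVpos x).ne']
  have hlogcont : Continuous (fun x => U x * Real.log (U x / V x)) :=
    hU.mul ((hU.div hV (fun x => (hVpos x).ne')).log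
      (fun x => (div_pos (hUpos x) (hVpos x)).ne'))
  have hBcont : Continuous B := by
    rw [hB]; exact (hlogcont.sub hU).add hV
  have hBint : Integrable B :=
    hBcont.integrable_of_hasCompactSupport (HasCompactSupport.intro isCompact_Icc hBsupp)
  have hAcont : Continuous A := by
    rw [hA]
    exact ((continuous_const.mul hU).add (continuous_const.mul hV)).div_const 3
  have hAint : Integrable A := by
    rw [hA]
    exact ((hUint.const_mul 2).add (hVint.const_mul 4)).div_const 3
  have hsABcont : Continuous (fun x => Real.sqrt (A x) * Real.sqrt (B x)) :=
    hAcont.sqrt.mul hBcont.sqrt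
  have hsABsupp : ∀ x ∉ Icc (-R) R, Real.sqrt (A x) * Real.sqrt (B x) = 0 := by
    intro x hx; rw [hBsupp x hx, Real.sqrt_zero, mul_zero]
  have hsABint : Integrable (fun x => Real.sqrt (A x) * Real.sqrt (B x)) :=
    hsABcont.integrable_of_hasCompactSupport (HasCompactSupport.intro isCompact_Icc hsABsupp)
  have habssupp : ∀ x ∉ Icc (-R) R, |U x - V x| = 0 := by
    intro x hx; rw [hdec x (not_mem_Icc_abs hx)]; simp
  have habsint : Integrable (fun x => |U x - V x|) :=
    ((hU.sub hV).abs).integrable_of_hasCompactSupport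
      (HasCompactSupport.intro isCompact_Icc habssupp)
  have h1 : ∫ x, |U x - V x| ≤ ∫ x, Real.sqrt (A x) * Real.sqrt (B x) :=
    integral_mono habsint hsABint hptw
  have hpq : Real.HolderConjugate 2 2 := Real.HolderConjugate.two_two
  have hofr : (ENNReal.ofReal 2) = 2 := by
    rw [show (2:ℝ) = ((2:ℕ):ℝ) by norm_num, ENNReal.ofReal_natCast]
    norm_num
  have hmemA : MemLp (fun x => Real.sqrt (A x)) (ENNReal.ofReal 2) volume := by
    rw [hofr, memLp_two_iff_integrable_sq hAcont.sqrt.aestronglyMeasurable]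
    have he : (fun x => Real.sqrt (A x) ^ 2) = A := by
      funext x; exact Real.sq_sqrt (hApos x).le
    rw [he]; exact hAint
  have hmemB : MemLp (fun x => Real.sqrt (B x)) (ENNReal.ofReal 2) volume := by
    rw [hofr, memLp_two_iff_integrable_sq hBcont.sqrt.aestronglyMeasurable]
    have he : (fun x => Real.sqrt (B x) ^ 2) = B := by
      funext x; exact Real.sq_sqrt (hBnn x)
    rw [he]; exact hBint
  have h2 := MeasureTheory.integral_mul_le_Lp_mul_Lq_of_nonneg hpq
    (Filter.Eventually.of_forall (fun x => Real.sqrt_nonneg (A x)))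
    (Filter.Eventually.of_forall (fun x => Real.sqrt_nonneg (B x))) hmemA hmemB
  have hIA : ∫ x, Real.sqrt (A x) ^ (2:ℝ) = ∫ x, A x := by
    apply integral_congr_ae
    apply ae_of_all
    intro x
    simp only [Real.rpow_two]
    exact Real.sq_sqrt (hApos x).le
  have hIB : ∫ x, Real.sqrt (B x) ^ (2:ℝ) = ∫ x, B x := by
    apply integral_congr_ae
    apply ae_of_all
    intro x
    simp only [Real.rpow_two]
    exact Real.sq_sqrt (hBnn x)
  rw [hIA, hIB] at h2
  have hIA2 : ∫ x, A x = 2 := by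
    simp only [hA]
    rw [integral_div, integral_add (hUint.const_mul 2) (hVint.const_mul 4),
      integral_const_mul, integral_const_mul, hUm, hVm]
    norm_num
  have hlogint : Integrable (fun x => U x * Real.log (U x / V x)) := by
    apply hlogcont.integrable_of_hasCompactSupport
    apply HasCompactSupport.intro isCompact_Icc
    intro x hx
    have heq := hdec x (not_mem_Icc_abs hx)
    simp [heq, div_self (hVpos x).ne']
  have hIB2 : ∫ x, B x = ∫ x, U x * Real.log (U x / V x) := by
    simp only [hB]
    have hsubint : Integrable (fun x => U x * Real.log (U x / V x) - U x) := hlogint.sub hUint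
    rw [integral_add hsubint hVint, integral_sub hlogint hUint, hUm, hVm]
    ring
  have hB0 : 0 ≤ ∫ x, B x := integral_nonneg hBnn
  have hH0 : 0 ≤ ∫ x, U x * Real.log (U x / V x) := by rw [← hIB2]; exact hB0
  rw [hIA2, hIB2] at h2
  calc ∫ x, |U x - V x| ≤ ∫ x, Real.sqrt (A x) * Real.sqrt (B x) := h1
    _ ≤ (2:ℝ) ^ (1/2:ℝ) * (∫ x, U x * Real.log (U x / V x)) ^ (1/2:ℝ) := h2
    _ = Real.sqrt 2 * Real.sqrt (∫ x, U x * Real.log (U x / V x)) := by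
        rw [← Real.sqrt_eq_rpow, ← Real.sqrt_eq_rpow]
    _ = Real.sqrt (2 * ∫ x, U x * Real.log (U x / V x)) :=
        (Real.sqrt_mul (by norm_num) _).symm

/-- Total variation estimate: for positive probability-density solutions of
`∂ₜu = ∂ₓ(u ∂ₓ(u+v))`, `∂ₜv = ∂ₓ(v ∂ₓ(u+v))` on `(0,T) × ℝ` agreeing outside a
compact set, `‖u(t) − v(t)‖_{L¹} ≤ √(2 H(u(0)‖v(0)))` for all `t ∈ [0,T]`. -/
theorem stmt_12 (T : ℝ) (hT : 0 < T) (u v : ℝ → ℝ → ℝ)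
    (husmooth : ContDiffOn ℝ 2 (Function.uncurry u) (Icc 0 T ×ˢ univ))
    (hvsmooth : ContDiffOn ℝ 2 (Function.uncurry v) (Icc 0 T ×ˢ univ))
    (hupos : ∀ t x : ℝ, 0 < u t x) (hvpos : ∀ t x : ℝ, 0 < v t x)
    (hu : ∀ t ∈ Ioo (0:ℝ) T, ∀ x : ℝ,
      pt u t x = px (fun s y => u s y * px (fun a b => u a b + v a b) s y) t x)
    (hv : ∀ t ∈ Ioo (0:ℝ) T, ∀ x : ℝ,
      pt v t x = px (fun s y => v s y * px (fun a b => u a b + v a b) s y) t x)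
    (R : ℝ) (hR : 0 < R)
    (hdecay : ∀ t ∈ Icc (0:ℝ) T, ∀ x : ℝ, R ≤ |x| → u t x = v t x)
    (huint : ∀ t ∈ Icc (0:ℝ) T, Integrable (u t))
    (hvint : ∀ t ∈ Icc (0:ℝ) T, Integrable (v t))
    (humass : ∀ t ∈ Icc (0:ℝ) T, ∫ x, u t x = 1)
    (hvmass : ∀ t ∈ Icc (0:ℝ) T, ∫ x, v t x = 1) :
    ∀ t ∈ Icc (0:ℝ) T,
      ∫ x, |u t x - v t x|
        ≤ Real.sqrt (2 * ∫ x, u 0 x * Real.log (u 0 x / v 0 x)) := by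
  intro t ht
  have hdect := hdecay t ht
  have hconU : Continuous (u t) := (slice_contDiff husmooth ht).continuous
  have hconV : Continuous (v t) := (slice_contDiff hvsmooth ht).continuous
  have hstep := pinsker_step (u t) (v t) hconU hconV (hupos t) (hvpos t)
    (huint t ht) (hvint t ht) (humass t ht) (hvmass t ht) hR hdect
  have h0mem : (0:ℝ) ∈ Icc (0:ℝ) T := ⟨le_rfl, hT.le⟩
  have hAeq := (integral_entF husmooth hvsmooth hupos hvpos hR ht hdect).2
  have hBeq := (integral_entF husmooth hvsmooth hupos hvpos hR h0mem (hdecay 0 h0mem)).2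
  have hCeq := entH_eq_init hT husmooth hvsmooth hupos hvpos hu hv hR hdecay t ht
  have heq : (∫ x, u t x * Real.log (u t x / v t x))
      = ∫ x, u 0 x * Real.log (u 0 x / v 0 x) := by
    have e1 : (∫ x, u t x * Real.log (u t x / v t x)) = ∫ x, entF u v t x := rfl
    have e2 : (∫ x, u 0 x * Real.log (u 0 x / v 0 x)) = ∫ x, entF u v 0 x := rfl
    rw [e1, e2, hAeq, hBeq, hCeq]
  rw [← heq]
  exact hstep
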